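/- For a potential ψ in the Schwartz class, the limit T(λ) = lim_{x→+∞, y→-∞} T(x,y,λ) of the reduced transition matrix exists for real λ, has the structure T(λ) = [[a(λ), conj(b(λ))],[b(λ), conj(a(λ))]], and satisfies |a(λ)|² − |b(λ)|² = 1. -/

import Mathlib

open Matrix Complex Filter

noncomputable section

open MeasureTheory intervalIntegral

lemma hasDerivAt_intInt {f : ℝ → ℝ} (hf : Continuous f) (a x : ℝ) :
    HasDerivAt (fun u => ∫ t in a..u, f t) (f x) x :=
  intervalIntegral.integral_hasDerivAt_right (hf.intervalIntegrable _ _)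
    ⟨Set.univ, Filter.univ_mem, hf.aestronglyMeasurable.restrict⟩ hf.continuousAt

/-- Grönwall with integrable coefficient, base point 0, forward in time. -/
lemma gron {u w : ℝ → ℝ} (hu : Continuous u) (hw : Continuous w)
    (hu0 : ∀ t, 0 ≤ u t) (hw0 : ∀ t, 0 ≤ w t) (A : ℝ)
    (h : ∀ x, 0 ≤ x → u x ≤ A + ∫ t in (0:ℝ)..x, w t * u t) :
    ∀ x, 0 ≤ x → u x ≤ A * Real.exp (∫ t in (0:ℝ)..x, w t) := by
  set g : ℝ → ℝ := fun x => ∫ t in (0:ℝ)..x, w t with hg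
  set h₁ : ℝ → ℝ := fun x => A + ∫ t in (0:ℝ)..x, w t * u t with hh₁
  set φ : ℝ → ℝ := fun x => h₁ x * Real.exp (-(g x)) with hφ
  have hgd : ∀ x, HasDerivAt g (w x) x := fun x => hasDerivAt_intInt hw 0 x
  have hhd : ∀ x, HasDerivAt h₁ (w x * u x) x := fun x =>
    ((hasDerivAt_intInt (hw.mul hu) 0 x).const_add A)
  have hφd : ∀ x, HasDerivAt φ ((w x * u x) * Real.exp (-(g x))
      + h₁ x * (Real.exp (-(g x)) * (-(w x)))) x := by
    intro x
    exact (hhd x).mul (((hgd x).neg).exp)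
  have hφanti : AntitoneOn φ (Set.Ici (0:ℝ)) := by
    apply antitoneOn_of_deriv_nonpos (convex_Ici 0)
    · exact fun x _ => ((hφd x).continuousAt).continuousWithinAt
    · exact fun x _ => (hφd x).differentiableAt.differentiableWithinAt
    · intro x hx
      rw [interior_Ici] at hx
      rw [(hφd x).deriv]
      have hux : u x ≤ h₁ x := h x (le_of_lt hx)
      have hexp : (0:ℝ) < Real.exp (-(g x)) := Real.exp_pos _
      nlinarith [hw0 x, hexp.le, mul_le_mul_of_nonneg_left hux (hw0 x)]
  intro x hx
  have := hφanti (Set.self_mem_Ici) hx hx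
  have hφ0 : φ 0 = A := by
    simp [hφ, hh₁, hg]
  rw [hφ0] at this
  have hexp : (0:ℝ) < Real.exp (-(g x)) := Real.exp_pos _
  have h1 : h₁ x ≤ A * Real.exp (g x) := by
    have := mul_le_mul_of_nonneg_right this (Real.exp_pos (g x)).le
    simpa [hφ, mul_assoc, ← Real.exp_add] using this
  exact (h x hx).trans h1


def Complex.abs : AbsoluteValue ℂ ℝ where
  toFun z := ‖z‖
  map_mul' := norm_mul
  nonneg' := norm_nonneg
  eq_zero' _ := norm_eq_zero
  add_le' := norm_add_le

lemma Complex.norm_eq_abs (z : ℂ) : ‖z‖ = Complex.abs z := rfl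

lemma Complex.continuous_abs : Continuous Complex.abs := continuous_norm

lemma Complex.abs_I : Complex.abs Complex.I = 1 := Complex.norm_I

lemma Complex.abs_two : Complex.abs 2 = 2 := Complex.norm_two

lemma Complex.abs_conj (z : ℂ) : Complex.abs ((starRingEnd ℂ) z) = Complex.abs z :=
  Complex.norm_conj z

lemma Complex.abs_exp (z : ℂ) : Complex.abs (Complex.exp z) = Real.exp z.re :=
  Complex.norm_exp z

def nrm (A : Matrix (Fin 2) (Fin 2) ℂ) : ℝ :=
  Complex.abs (A 0 0) + Complex.abs (A 0 1) + Complex.abs (A 1 0) + Complex.abs (A 1 1)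

lemma nrm_nonneg (A : Matrix (Fin 2) (Fin 2) ℂ) : 0 ≤ nrm A := by
  unfold nrm; positivity

lemma entry_le_nrm (A : Matrix (Fin 2) (Fin 2) ℂ) (i j : Fin 2) :
    Complex.abs (A i j) ≤ nrm A := by
  unfold nrm
  fin_cases i <;> fin_cases j <;> simp only [Fin.zero_eta, Fin.mk_one, Fin.isValue] <;>
    nlinarith [AbsoluteValue.nonneg Complex.abs (A 0 0),
      AbsoluteValue.nonneg Complex.abs (A 0 1),
      AbsoluteValue.nonneg Complex.abs (A 1 0),
      AbsoluteValue.nonneg Complex.abs (A 1 1)]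

/-- Norm bound for matrix product, via column sums of `A`. -/
lemma nrm_mul_le (A B : Matrix (Fin 2) (Fin 2) ℂ) (c : ℝ)
    (h0 : Complex.abs (A 0 0) + Complex.abs (A 1 0) ≤ c)
    (h1 : Complex.abs (A 0 1) + Complex.abs (A 1 1) ≤ c) :
    nrm (A * B) ≤ c * nrm B := by
  have key : ∀ i j : Fin 2, Complex.abs ((A * B) i j)
      ≤ Complex.abs (A i 0) * Complex.abs (B 0 j) + Complex.abs (A i 1) * Complex.abs (B 1 j) := by
    intro i j
    rw [Matrix.mul_apply, Fin.sum_univ_two]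
    calc Complex.abs (A i 0 * B 0 j + A i 1 * B 1 j)
        ≤ Complex.abs (A i 0 * B 0 j) + Complex.abs (A i 1 * B 1 j) :=
          AbsoluteValue.add_le _ _ _
      _ = _ := by rw [AbsoluteValue.map_mul, AbsoluteValue.map_mul]
  have B00 := AbsoluteValue.nonneg Complex.abs (B 0 0)
  have B01 := AbsoluteValue.nonneg Complex.abs (B 0 1)
  have B10 := AbsoluteValue.nonneg Complex.abs (B 1 0)
  have B11 := AbsoluteValue.nonneg Complex.abs (B 1 1)
  have k00 := key 0 0; have k01 := key 0 1; have k10 := key 1 0; have k11 := key 1 1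
  unfold nrm
  nlinarith [AbsoluteValue.nonneg Complex.abs (A 0 0), AbsoluteValue.nonneg Complex.abs (A 0 1),
    AbsoluteValue.nonneg Complex.abs (A 1 0), AbsoluteValue.nonneg Complex.abs (A 1 1)]

/-- If `Z' = D` entrywise with continuous `D` satisfying `nrm (D t) ≤ w t * nrm (Z t)`
for `t ≥ 0`, then `nrm (Z x) ≤ nrm (Z 0) * exp (∫₀ˣ w)` for `x ≥ 0`. -/
lemma bound_onward (Z D : ℝ → Matrix (Fin 2) (Fin 2) ℂ) (w : ℝ → ℝ)
    (hd : ∀ t i j, HasDerivAt (fun s => Z s i j) (D t i j) t)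
    (hDc : ∀ i j, Continuous fun t => D t i j)
    (hw : Continuous w) (hw0 : ∀ t, 0 ≤ w t)
    (hb : ∀ t, 0 ≤ t → nrm (D t) ≤ w t * nrm (Z t)) :
    ∀ x, 0 ≤ x → nrm (Z x) ≤ nrm (Z 0) * Real.exp (∫ t in (0:ℝ)..x, w t) := by
  have hZc : ∀ i j, Continuous fun t => Z t i j := fun i j =>
    continuous_iff_continuousAt.2 fun t => (hd t i j).continuousAt
  have hZa : ∀ i j, Continuous fun t => Complex.abs (Z t i j) := fun i j =>
    Complex.continuous_abs.comp (hZc i j)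
  have hDa : ∀ i j, Continuous fun t => Complex.abs (D t i j) := fun i j =>
    Complex.continuous_abs.comp (hDc i j)
  have hnZc : Continuous fun t => nrm (Z t) := by
    unfold nrm
    exact (((hZa 0 0).add (hZa 0 1)).add (hZa 1 0)).add (hZa 1 1)
  have hnDc : Continuous fun t => nrm (D t) := by
    unfold nrm
    exact (((hDa 0 0).add (hDa 0 1)).add (hDa 1 0)).add (hDa 1 1)
  have hineq : ∀ x, 0 ≤ x → nrm (Z x) ≤ nrm (Z 0) + ∫ t in (0:ℝ)..x, w t * nrm (Z t) := by
    intro x hx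
    have hftc : ∀ i j : Fin 2, Z x i j - Z 0 i j = ∫ t in (0:ℝ)..x, D t i j := by
      intro i j
      rw [intervalIntegral.integral_eq_sub_of_hasDerivAt
        (fun t _ => hd t i j) (((hDc i j)).intervalIntegrable _ _)]
    have habs : ∀ i j : Fin 2, Complex.abs (Z x i j)
        ≤ Complex.abs (Z 0 i j) + ∫ t in (0:ℝ)..x, Complex.abs (D t i j) := by
      intro i j
      have h1 : Complex.abs (Z x i j - Z 0 i j) ≤ ∫ t in (0:ℝ)..x, Complex.abs (D t i j) := by
        rw [hftc i j, ← Complex.norm_eq_abs]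
        refine le_trans (intervalIntegral.norm_integral_le_integral_norm (μ := volume)
          (f := fun t => D t i j) hx) (le_of_eq ?_)
        simp [Complex.norm_eq_abs]
      calc Complex.abs (Z x i j)
          ≤ Complex.abs (Z 0 i j) + Complex.abs (Z x i j - Z 0 i j) := by
            have := AbsoluteValue.add_le Complex.abs (Z 0 i j) (Z x i j - Z 0 i j)
            simpa using this
        _ ≤ _ := by linarith
    have i00 := (hDa 0 0).intervalIntegrable (μ := volume) 0 x
    have i01 := (hDa 0 1).intervalIntegrable (μ := volume) 0 x
    have i10 := (hDa 1 0).intervalIntegrable (μ := volume) 0 x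
    have i11 := (hDa 1 1).intervalIntegrable (μ := volume) 0 x
    have e : (∫ t in (0:ℝ)..x, nrm (D t))
        = (((∫ t in (0:ℝ)..x, Complex.abs (D t 0 0)) + ∫ t in (0:ℝ)..x, Complex.abs (D t 0 1))
        + ∫ t in (0:ℝ)..x, Complex.abs (D t 1 0)) + ∫ t in (0:ℝ)..x, Complex.abs (D t 1 1) := by
      rw [← intervalIntegral.integral_add i00 i01,
        ← intervalIntegral.integral_add (i00.add i01) i10,
        ← intervalIntegral.integral_add ((i00.add i01).add i10) i11]
      rfl
    have hsum : nrm (Z x) ≤ nrm (Z 0) + ∫ t in (0:ℝ)..x, nrm (D t) := by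
      rw [e]
      have h00 := habs 0 0; have h01 := habs 0 1; have h10 := habs 1 0; have h11 := habs 1 1
      unfold nrm; linarith
    refine hsum.trans ?_
    gcongr nrm (Z 0) + ?_
    apply intervalIntegral.integral_mono_on hx
    · exact hnDc.intervalIntegrable _ _
    · exact (hw.mul hnZc).intervalIntegrable _ _
    · intro t ht; exact hb t ht.1
  exact gron hnZc hw (fun t => nrm_nonneg _) hw0 _ hineq

lemma nrm_zero : nrm 0 = 0 := by simp [nrm]

lemma nrm_neg (A : Matrix (Fin 2) (Fin 2) ℂ) : nrm (-A) = nrm A := by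
  simp [nrm]

/-- Uniqueness: a solution of the linear ODE vanishing at one point vanishes everywhere. -/
lemma ode_eq_zero (Z D : ℝ → Matrix (Fin 2) (Fin 2) ℂ) (w : ℝ → ℝ)
    (hd : ∀ t i j, HasDerivAt (fun s => Z s i j) (D t i j) t)
    (hDc : ∀ i j, Continuous fun t => D t i j)
    (hw : Continuous w) (hw0 : ∀ t, 0 ≤ w t)
    (hb : ∀ t, nrm (D t) ≤ w t * nrm (Z t))
    (a : ℝ) (hZa : Z a = 0) : ∀ x, Z x = 0 := by
  have key : ∀ x, nrm (Z x) ≤ 0 := by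
    intro x
    rcases le_total a x with hax | hxa
    · have hfwd := bound_onward (fun s => Z (a + s)) (fun s => D (a + s)) (fun s => w (a + s))
        (fun t i j => by
          have hinner : HasDerivAt (fun s : ℝ => a + s) 1 t := by
            simpa using (hasDerivAt_id t).const_add a
          have := (hd (a + t) i j).scomp (x := t) hinner
          simpa [Function.comp_def] using this)
        (fun i j => (hDc i j).comp (continuous_const.add continuous_id))
        (hw.comp (continuous_const.add continuous_id)) (fun t => hw0 _)
        (fun t _ => hb (a + t))
      have := hfwd (x - a) (by linarith)
      simpa [hZa, nrm_zero] using this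
    · have hbwd := bound_onward (fun s => Z (a - s)) (fun s => -D (a - s)) (fun s => w (a - s))
        (fun t i j => by
          have hinner : HasDerivAt (fun s : ℝ => a - s) (-1) t := by
            simpa using (hasDerivAt_id t).const_sub a
          have := (hd (a - t) i j).scomp (x := t) hinner
          simpa [Function.comp_def, Matrix.neg_apply] using this)
        (fun i j => ((hDc i j).comp (continuous_const.sub continuous_id)).neg)
        (hw.comp (continuous_const.sub continuous_id)) (fun t => hw0 _)
        (fun t _ => by simpa [nrm_neg] using hb (a - t))
      have := hbwd (a - x) (by linarith)
      simpa [hZa, nrm_zero] using this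
  intro x
  ext i j
  have h1 := entry_le_nrm (Z x) i j
  have h2 := AbsoluteValue.nonneg Complex.abs (Z x i j)
  have : Complex.abs (Z x i j) = 0 := le_antisymm (h1.trans (key x)) h2
  simpa [Matrix.zero_apply] using (AbsoluteValue.eq_zero _).1 this

lemma hasDerivAt_conj' {f : ℝ → ℂ} {f' : ℂ} {x : ℝ} (h : HasDerivAt f f' x) :
    HasDerivAt (fun t => (starRingEnd ℂ) (f t)) ((starRingEnd ℂ) f') x := by
  simpa [Function.comp_def] using (Complex.conjCLE.hasFDerivAt.comp_hasDerivAt x h)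

lemma hasDerivAt_ofReal' (x : ℝ) : HasDerivAt (fun t : ℝ => (t : ℂ)) 1 x := by
  simpa using (hasDerivAt_id x).ofReal_comp

lemma hasDerivAt_cexp_mul (c : ℂ) (x : ℝ) :
    HasDerivAt (fun t : ℝ => Complex.exp (c * t)) (c * Complex.exp (c * x)) x := by
  have := ((hasDerivAt_ofReal' x).const_mul c).cexp
  simpa [mul_comm] using this


def sigma3 : Matrix (Fin 2) (Fin 2) ℂ := !![1, 0; 0, -1]

def Y0 (ψ : ℝ → ℂ) (x : ℝ) : Matrix (Fin 2) (Fin 2) ℂ :=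
  !![0, (starRingEnd ℂ) (ψ x); ψ x, 0]

def Vmat (ψ : ℝ → ℂ) (lam : ℂ) (x : ℝ) : Matrix (Fin 2) (Fin 2) ℂ :=
  (-(Complex.I * lam) / 2) • sigma3 + Y0 ψ x

/-- `E(λx/2)⁻¹ = exp((iλx/2)σ₃)` written explicitly. -/
def Einv (lam x : ℝ) : Matrix (Fin 2) (Fin 2) ℂ :=
  !![Complex.exp (Complex.I * lam * x / 2), 0;
     0, Complex.exp (-(Complex.I * lam * x / 2))]

/-- For Schwartz potential `ψ`, the reduced transition matrix
`T(x,y,λ) = E(λx/2)⁻¹ M(x,y,λ) E(-λy/2)⁻¹` has a limit as `x → +∞`, `y → -∞`, of the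
form `[[a, conj b],[b, conj a]]` with `|a|² - |b|² = 1`. -/
theorem statement15 (ψ : SchwartzMap ℝ ℂ)
    (M : ℂ → ℝ → ℝ → Matrix (Fin 2) (Fin 2) ℂ)
    (hODE : ∀ lam y x i j, HasDerivAt (fun t => M lam t y i j)
      ((Vmat (fun s => ψ s) lam x * M lam x y) i j) x)
    (hinit : ∀ lam y, M lam y y = 1) :
    ∀ lam : ℝ, ∃ a b : ℂ,
      Tendsto (fun p : ℝ × ℝ =>
          Einv lam p.1 * M (lam : ℂ) p.1 p.2 * Einv lam (-p.2))
        (atTop ×ˢ atBot)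
        (nhds !![a, (starRingEnd ℂ) b; b, (starRingEnd ℂ) a]) ∧
      ‖a‖ ^ 2 - ‖b‖ ^ 2 = 1 := by
  intro lam
  set L : ℂ := ((lam : ℝ) : ℂ) with hL
  have hψc : Continuous fun s : ℝ => (ψ s : ℂ) := ψ.continuous
  have hψa : Continuous fun s : ℝ => Complex.abs (ψ s) := Complex.continuous_abs.comp hψc
  -- entries of V
  have hV0 : ∀ (x : ℝ) (A : Matrix (Fin 2) (Fin 2) ℂ) (j : Fin 2),
      (Vmat (fun s => ψ s) L x * A) 0 j
        = -(Complex.I * L)/2 * A 0 j + (starRingEnd ℂ) (ψ x) * A 1 j := by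
    intro x A j
    rw [Matrix.mul_apply, Fin.sum_univ_two]
    simp [Vmat, sigma3, Y0]
  have hV1 : ∀ (x : ℝ) (A : Matrix (Fin 2) (Fin 2) ℂ) (j : Fin 2),
      (Vmat (fun s => ψ s) L x * A) 1 j
        = (ψ x) * A 0 j + (Complex.I * L)/2 * A 1 j := by
    intro x A j
    rw [Matrix.mul_apply, Fin.sum_univ_two]
    simp [Vmat, sigma3, Y0]
    ring
  -- continuity of V entries
  have hVc : ∀ i k : Fin 2, Continuous fun t => Vmat (fun s => ψ s) L t i k := by
    intro i k
    fin_cases i <;> fin_cases k <;>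
      · simp [Vmat, sigma3, Y0, Matrix.add_apply, Matrix.smul_apply, smul_eq_mul]
        first
        | exact continuous_const
        | exact continuous_star.comp hψc
        | exact hψc
        | fun_prop
  -- uniqueness of solutions of M' = V M
  have huniq : ∀ (P Q : ℝ → Matrix (Fin 2) (Fin 2) ℂ),
      (∀ x i j, HasDerivAt (fun t => P t i j) ((Vmat (fun s => ψ s) L x * P x) i j) x) →
      (∀ x i j, HasDerivAt (fun t => Q t i j) ((Vmat (fun s => ψ s) L x * Q x) i j) x) →
      ∀ a, P a = Q a → ∀ x, P x = Q x := by
    intro P Q hP hQ a ha x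
    have hPc : ∀ i j, Continuous fun t => P t i j := fun i j =>
      continuous_iff_continuousAt.2 fun t => (hP t i j).continuousAt
    have hQc : ∀ i j, Continuous fun t => Q t i j := fun i j =>
      continuous_iff_continuousAt.2 fun t => (hQ t i j).continuousAt
    have hZc : ∀ i j : Fin 2, Continuous fun t => P t i j - Q t i j := fun i j =>
      (hPc i j).sub (hQc i j)
    have hVabs : ∀ t : ℝ, Complex.abs (Vmat (fun s => ψ s) L t 0 0) = Complex.abs L / 2
        ∧ Complex.abs (Vmat (fun s => ψ s) L t 0 1) = Complex.abs (ψ t)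
        ∧ Complex.abs (Vmat (fun s => ψ s) L t 1 0) = Complex.abs (ψ t)
        ∧ Complex.abs (Vmat (fun s => ψ s) L t 1 1) = Complex.abs L / 2 := by
      intro t
      refine ⟨?_, ?_, ?_, ?_⟩ <;>
        simp [Vmat, sigma3, Y0, map_div₀, _root_.map_mul, Complex.abs_I, Complex.abs_two,
          Complex.abs_conj]
    have key := ode_eq_zero (fun t => P t - Q t)
      (fun t => Vmat (fun s => ψ s) L t * (P t - Q t))
      (fun t => Complex.abs L / 2 + Complex.abs (ψ t))
      (fun t i j => by
        simpa [Matrix.mul_sub, Matrix.sub_apply, Pi.sub_def] using (hP t i j).sub (hQ t i j))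
      (fun i j => by
        have : (fun t => (Vmat (fun s => ψ s) L t * (P t - Q t)) i j)
            = fun t => Vmat (fun s => ψ s) L t i 0 * (P t 0 j - Q t 0 j)
              + Vmat (fun s => ψ s) L t i 1 * (P t 1 j - Q t 1 j) := by
          funext t; rw [Matrix.mul_apply, Fin.sum_univ_two]; simp [Matrix.sub_apply]
        rw [this]
        exact ((hVc i 0).mul (hZc 0 j)).add ((hVc i 1).mul (hZc 1 j)))
      ((continuous_const).add hψa)
      (fun t => by positivity)
      (fun t => by
        apply nrm_mul_le
        · rw [(hVabs t).1, (hVabs t).2.2.1]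
        · rw [(hVabs t).2.1, (hVabs t).2.2.2]; linarith)
      a (by simp [ha]) x
    exact sub_eq_zero.mp key
  have hconjL : (starRingEnd ℂ) L = L := by rw [hL]; exact Complex.conj_ofReal lam
  -- σ₁-conjugation symmetry of M(·,0)
  have hMs : ∀ x : ℝ, M L x 0 =
      !![(starRingEnd ℂ) (M L x 0 1 1), (starRingEnd ℂ) (M L x 0 1 0);
         (starRingEnd ℂ) (M L x 0 0 1), (starRingEnd ℂ) (M L x 0 0 0)] := by
    set Ms : ℝ → Matrix (Fin 2) (Fin 2) ℂ := fun t =>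
      !![(starRingEnd ℂ) (M L t 0 1 1), (starRingEnd ℂ) (M L t 0 1 0);
         (starRingEnd ℂ) (M L t 0 0 1), (starRingEnd ℂ) (M L t 0 0 0)] with hMsDef
    have hQode : ∀ x (i j : Fin 2),
        HasDerivAt (fun t => Ms t i j) ((Vmat (fun s => ψ s) L x * Ms x) i j) x := by
      intro x i j
      fin_cases i <;> fin_cases j
      · show HasDerivAt (fun t => Ms t 0 0) ((Vmat (fun s => ψ s) L x * Ms x) 0 0) x
        have h := hasDerivAt_conj' (hODE L 0 x 1 1)
        have hval : ((Vmat (fun s => ψ s) L x * Ms x) 0 0)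
            = (starRingEnd ℂ) ((Vmat (fun s => ψ s) L x * M L x 0) 1 1) := by
          rw [hV0 x (Ms x) 0, hV1 x (M L x 0) 1]
          simp [hMsDef, map_add, _root_.map_mul, map_div₀, map_neg, map_ofNat,
            Complex.conj_I, hconjL, Complex.conj_conj]
          ring
        rw [hval]; simpa [hMsDef] using h
      · show HasDerivAt (fun t => Ms t 0 1) ((Vmat (fun s => ψ s) L x * Ms x) 0 1) x
        have h := hasDerivAt_conj' (hODE L 0 x 1 0)
        have hval : ((Vmat (fun s => ψ s) L x * Ms x) 0 1)
            = (starRingEnd ℂ) ((Vmat (fun s => ψ s) L x * M L x 0) 1 0) := by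
          rw [hV0 x (Ms x) 1, hV1 x (M L x 0) 0]
          simp [hMsDef, map_add, _root_.map_mul, map_div₀, map_neg, map_ofNat,
            Complex.conj_I, hconjL, Complex.conj_conj]
          ring
        rw [hval]; simpa [hMsDef] using h
      · show HasDerivAt (fun t => Ms t 1 0) ((Vmat (fun s => ψ s) L x * Ms x) 1 0) x
        have h := hasDerivAt_conj' (hODE L 0 x 0 1)
        have hval : ((Vmat (fun s => ψ s) L x * Ms x) 1 0)
            = (starRingEnd ℂ) ((Vmat (fun s => ψ s) L x * M L x 0) 0 1) := by
          rw [hV1 x (Ms x) 0, hV0 x (M L x 0) 1]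
          simp [hMsDef, map_add, _root_.map_mul, map_div₀, map_neg, map_ofNat,
            Complex.conj_I, hconjL, Complex.conj_conj]
          ring
        rw [hval]; simpa [hMsDef] using h
      · show HasDerivAt (fun t => Ms t 1 1) ((Vmat (fun s => ψ s) L x * Ms x) 1 1) x
        have h := hasDerivAt_conj' (hODE L 0 x 0 0)
        have hval : ((Vmat (fun s => ψ s) L x * Ms x) 1 1)
            = (starRingEnd ℂ) ((Vmat (fun s => ψ s) L x * M L x 0) 0 0) := by
          rw [hV1 x (Ms x) 1, hV0 x (M L x 0) 0]
          simp [hMsDef, map_add, _root_.map_mul, map_div₀, map_neg, map_ofNat,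
            Complex.conj_I, hconjL, Complex.conj_conj]
          ring
        rw [hval]; simpa [hMsDef] using h
    have h0 : M L 0 0 = Ms 0 := by
      rw [hinit L 0]
      ext i j
      fin_cases i <;> fin_cases j <;> simp [hMsDef, hinit L 0, Matrix.one_apply]
    exact huniq (fun x => M L x 0) Ms (fun x i j => hODE L 0 x i j) hQode 0 h0
  -- determinant is 1
  have hdet : ∀ x : ℝ, M L x 0 0 0 * M L x 0 1 1 - M L x 0 0 1 * M L x 0 1 0 = 1 := by
    have hder : ∀ x : ℝ, HasDerivAt
        (fun t => M L t 0 0 0 * M L t 0 1 1 - M L t 0 0 1 * M L t 0 1 0) 0 x := by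
      intro x
      have h := ((hODE L 0 x 0 0).mul (hODE L 0 x 1 1)).sub
        ((hODE L 0 x 0 1).mul (hODE L 0 x 1 0))
      convert h using 1
      · rfl
      · rfl
      rw [hV0 x (M L x 0) 0, hV0 x (M L x 0) 1, hV1 x (M L x 0) 0, hV1 x (M L x 0) 1]
      ring
    intro x
    have hconst := is_const_of_deriv_eq_zero
      (fun y => (hder y).differentiableAt) (fun y => (hder y).deriv) x 0
    rw [hconst]
    simp [hinit L 0, Matrix.one_apply]
  -- cocycle / inverse via adjugate
  have hcc : ∀ y x : ℝ, M L x y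
      = M L x 0 * !![M L y 0 1 1, -(M L y 0 0 1); -(M L y 0 1 0), M L y 0 0 0] := by
    intro y
    set Am : Matrix (Fin 2) (Fin 2) ℂ :=
      !![M L y 0 1 1, -(M L y 0 0 1); -(M L y 0 1 0), M L y 0 0 0] with hAm
    refine huniq (fun x => M L x y) (fun x => M L x 0 * Am)
      (fun x i j => hODE L y x i j) ?_ y ?_
    · intro x i j
      have h := ((hODE L 0 x i 0).mul_const (Am 0 j)).add ((hODE L 0 x i 1).mul_const (Am 1 j))
      convert h using 1
      · rfl
      · funext t
        show (M L t 0 * Am) i j = _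
        rw [Matrix.mul_apply, Fin.sum_univ_two]
        rfl
      · rw [← Matrix.mul_assoc, Matrix.mul_apply, Fin.sum_univ_two]
    · show M L y y = M L y 0 * Am
      rw [hinit L y]
      ext i j
      fin_cases i <;> fin_cases j <;>
        rw [Matrix.mul_apply, Fin.sum_univ_two] <;>
        simp [hAm, Matrix.one_apply] <;>
        first
        | linear_combination hdet y
        | linear_combination -hdet y
        | ring
  -- the reduced solution N(x) = Einv(x) M(x,0) and its coefficient matrix W
  set Nn : ℝ → Matrix (Fin 2) (Fin 2) ℂ := fun x => Einv lam x * M L x 0 with hNn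
  set Wm : ℝ → Matrix (Fin 2) (Fin 2) ℂ := fun x =>
    !![0, Complex.exp (Complex.I*lam*x) * (starRingEnd ℂ) (ψ x);
       Complex.exp (-(Complex.I*lam*x)) * ψ x, 0] with hWm
  have hNe0 : ∀ (x : ℝ) (j : Fin 2),
      Nn x 0 j = Complex.exp (Complex.I*lam*x/2) * M L x 0 0 j := by
    intro x j
    show (Einv lam x * M L x 0) 0 j = _
    rw [Matrix.mul_apply, Fin.sum_univ_two]
    simp [Einv]
  have hNe1 : ∀ (x : ℝ) (j : Fin 2),
      Nn x 1 j = Complex.exp (-(Complex.I*lam*x/2)) * M L x 0 1 j := by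
    intro x j
    show (Einv lam x * M L x 0) 1 j = _
    rw [Matrix.mul_apply, Fin.sum_univ_two]
    simp [Einv]
  have hNd : ∀ (x : ℝ) (i j : Fin 2),
      HasDerivAt (fun t => Nn t i j) ((Wm x * Nn x) i j) x := by
    intro x i j
    fin_cases i
    · show HasDerivAt (fun t => Nn t 0 j) ((Wm x * Nn x) 0 j) x
      have hfun : (fun t => Nn t 0 j)
          = fun t : ℝ => Complex.exp ((Complex.I*lam/2) * t) * M L t 0 0 j := by
        funext t; rw [hNe0 t j]; congr 2; push_cast; ring
      rw [hfun]
      have h := (hasDerivAt_cexp_mul (Complex.I*lam/2) x).mul (hODE L 0 x 0 j)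
      convert h using 1
      · rfl
      · rfl
      rw [Matrix.mul_apply, Fin.sum_univ_two, hV0 x (M L x 0) j, hNe1 x j]
      have e1 : Complex.exp (Complex.I*lam*x) * Complex.exp (-(Complex.I*lam*x/2))
          = Complex.exp (Complex.I*lam/2*x) := by
        rw [← Complex.exp_add]; congr 1; ring
      simp only [hWm, hL, Matrix.cons_val', Matrix.cons_val_zero, Matrix.cons_val_one,
        Matrix.head_cons, Matrix.empty_val', Matrix.cons_val_fin_one, Matrix.head_fin_const,
        Matrix.of_apply]
      linear_combination ((starRingEnd ℂ) (ψ x) * M L x 0 1 j) * e1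
    · show HasDerivAt (fun t => Nn t 1 j) ((Wm x * Nn x) 1 j) x
      have hfun : (fun t => Nn t 1 j)
          = fun t : ℝ => Complex.exp ((-(Complex.I*lam/2)) * t) * M L t 0 1 j := by
        funext t; rw [hNe1 t j]; congr 2; push_cast; ring
      rw [hfun]
      have h := (hasDerivAt_cexp_mul (-(Complex.I*lam/2)) x).mul (hODE L 0 x 1 j)
      convert h using 1
      · rfl
      · rfl
      rw [Matrix.mul_apply, Fin.sum_univ_two, hV1 x (M L x 0) j, hNe0 x j]
      have e2 : Complex.exp (-(Complex.I*lam*x)) * Complex.exp (Complex.I*lam*x/2)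
          = Complex.exp (-(Complex.I*lam/2)*x) := by
        rw [← Complex.exp_add]; congr 1; ring
      simp only [hWm, hL, Matrix.cons_val', Matrix.cons_val_zero, Matrix.cons_val_one,
        Matrix.head_cons, Matrix.empty_val', Matrix.cons_val_fin_one, Matrix.head_fin_const,
        Matrix.of_apply]
      linear_combination ((ψ x : ℂ) * M L x 0 0 j) * e2
  have hNc : ∀ i j : Fin 2, Continuous fun t => Nn t i j := fun i j =>
    continuous_iff_continuousAt.2 fun t => (hNd t i j).continuousAt
  have hexpc : ∀ c : ℂ, Continuous fun t : ℝ => Complex.exp (c * t) :=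
    fun c => Complex.continuous_exp.comp (continuous_const.mul Complex.continuous_ofReal)
  have hWc : ∀ i j : Fin 2, Continuous fun t => Wm t i j := by
    intro i j
    fin_cases i <;> fin_cases j <;> simp [hWm] <;>
      first
      | exact continuous_const
      | · apply Continuous.mul
          · have := hexpc (Complex.I*lam)
            simpa [mul_assoc] using this
          · first
            | exact continuous_star.comp hψc
            | exact hψc
      | · apply Continuous.mul
          · have := (hexpc (-(Complex.I*lam)))
            refine Continuous.congr this fun t => ?_
            congr 1; ring
          · first
            | exact continuous_star.comp hψc
            | exact hψc
  have hgc : ∀ i j : Fin 2, Continuous fun t => (Wm t * Nn t) i j := by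
    intro i j
    have : (fun t => (Wm t * Nn t) i j)
        = fun t => Wm t i 0 * Nn t 0 j + Wm t i 1 * Nn t 1 j := by
      funext t; rw [Matrix.mul_apply, Fin.sum_univ_two]
    rw [this]
    exact ((hWc i 0).mul (hNc 0 j)).add ((hWc i 1).mul (hNc 1 j))
  -- the column sums of |Wm| are |ψ|
  have hreI : ∀ t : ℝ, (Complex.I * (lam:ℂ) * (t:ℂ)).re = 0 := by
    intro t; simp
  have habsW : ∀ t : ℝ, Complex.abs (Wm t 0 1) = Complex.abs (ψ t)
      ∧ Complex.abs (Wm t 1 0) = Complex.abs (ψ t) := by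
    intro t
    constructor <;>
      simp [hWm, _root_.map_mul, Complex.abs_exp, hreI, Complex.abs_conj]
  have hWcol : ∀ t : ℝ, nrm (Wm t * Nn t) ≤ Complex.abs (ψ t) * nrm (Nn t) := by
    intro t
    apply nrm_mul_le
    · rw [(habsW t).2]; simp [hWm]
    · rw [(habsW t).1]; simp [hWm]
  -- global bound on nrm (Nn x)
  have hKint : Integrable (fun t => Complex.abs (ψ t)) := by
    simpa [Complex.norm_eq_abs] using (SchwartzMap.integrable ψ (μ := volume)).norm
  set K : ℝ := ∫ t : ℝ, Complex.abs (ψ t) with hK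
  have hKb : ∀ u v : ℝ, u ≤ v → (∫ t in u..v, Complex.abs (ψ t)) ≤ K := by
    intro u v huv
    rw [intervalIntegral.integral_of_le huv]
    exact MeasureTheory.setIntegral_le_integral hKint
      (Filter.Eventually.of_forall fun t => AbsoluteValue.nonneg _ _)
  set B : ℝ := nrm (Nn 0) * Real.exp K with hB
  have hNbd : ∀ x : ℝ, nrm (Nn x) ≤ B := by
    intro x
    rcases le_total 0 x with hx | hx
    · have h := bound_onward Nn (fun t => Wm t * Nn t) (fun t => Complex.abs (ψ t))
        hNd hgc hψa (fun t => AbsoluteValue.nonneg _ _) (fun t _ => hWcol t) x hx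
      refine h.trans ?_
      exact mul_le_mul_of_nonneg_left (Real.exp_le_exp.2 (hKb 0 x hx)) (nrm_nonneg _)
    · have h := bound_onward (fun s => Nn (-s)) (fun s => -(Wm (-s) * Nn (-s)))
        (fun s => Complex.abs (ψ (-s)))
        (fun t i j => by
          have hinner : HasDerivAt (fun s : ℝ => -s) (-1) t := by
            simpa [Pi.neg_def] using (hasDerivAt_id t).neg
          have := (hNd (-t) i j).scomp (x := t) hinner
          simpa [Function.comp_def, Matrix.neg_apply] using this)
        (fun i j => by
          have := (hgc i j).comp (continuous_neg : Continuous fun s : ℝ => -s)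
          exact this.neg)
        (hψa.comp continuous_neg) (fun t => AbsoluteValue.nonneg _ _)
        (fun t _ => by simpa [nrm_neg] using hWcol (-t)) (-x) (by linarith)
      simp only [neg_neg, neg_zero] at h
      refine h.trans ?_
      have : (∫ σ in (0:ℝ)..(-x), Complex.abs (ψ (-σ))) ≤ K := by
        rw [intervalIntegral.integral_comp_neg (fun t => Complex.abs (ψ t))]
        simpa using hKb x 0 hx
      exact mul_le_mul_of_nonneg_left (Real.exp_le_exp.2 this) (nrm_nonneg _)
  have hEnt : ∀ (x : ℝ) (i j : Fin 2),
      Complex.abs ((Wm x * Nn x) i j) ≤ Complex.abs (ψ x) * B := by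
    intro x i j
    refine (entry_le_nrm _ i j).trans ((hWcol x).trans ?_)
    exact mul_le_mul_of_nonneg_left (hNbd x) (AbsoluteValue.nonneg _ _)
  have hInt : ∀ (s : Set ℝ), ∀ i j : Fin 2,
      MeasureTheory.IntegrableOn (fun t => (Wm t * Nn t) i j) s := by
    intro s i j
    apply MeasureTheory.Integrable.mono' ((hKint.mul_const B).integrableOn)
    · exact ((hgc i j).aestronglyMeasurable).restrict
    · exact Filter.Eventually.of_forall fun t => by
        simpa [Complex.norm_eq_abs] using hEnt t i j
  -- limits at ±∞
  have hNrep : ∀ (x : ℝ) (i j : Fin 2),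
      Nn x i j = Nn 0 i j + ∫ t in (0:ℝ)..x, (Wm t * Nn t) i j := by
    intro x i j
    rw [intervalIntegral.integral_eq_sub_of_hasDerivAt (f := fun t => Nn t i j)
      (fun t _ => hNd t i j) (((hgc i j)).intervalIntegrable 0 x)]
    ring
  set Np : Matrix (Fin 2) (Fin 2) ℂ :=
    Matrix.of (fun i j => Nn 0 i j + ∫ t in Set.Ioi (0:ℝ), (Wm t * Nn t) i j) with hNpd
  set Nm : Matrix (Fin 2) (Fin 2) ℂ :=
    Matrix.of (fun i j => Nn 0 i j - ∫ t in Set.Iic (0:ℝ), (Wm t * Nn t) i j) with hNmd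
  have hTop : ∀ i j : Fin 2, Tendsto (fun x => Nn x i j) atTop (nhds (Np i j)) := by
    intro i j
    have h := MeasureTheory.intervalIntegral_tendsto_integral_Ioi 0
      (hInt _ i j) (tendsto_id (α := ℝ))
    exact ((tendsto_const_nhds (x := Nn 0 i j)).add h).congr fun x => (hNrep x i j).symm
  have hBot : ∀ i j : Fin 2, Tendsto (fun x => Nn x i j) atBot (nhds (Nm i j)) := by
    intro i j
    have h := MeasureTheory.intervalIntegral_tendsto_integral_Iic 0
      (hInt _ i j) (tendsto_id (α := ℝ))
    refine ((tendsto_const_nhds (x := Nn 0 i j)).sub h).congr fun x => ?_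
    simp only [id_eq]
    rw [intervalIntegral.integral_eq_sub_of_hasDerivAt (f := fun t => Nn t i j)
      (fun t _ => hNd t i j) (((hgc i j)).intervalIntegrable x 0)]
    ring
  -- symmetry of Nn
  have hconjexp : ∀ x : ℝ,
      (starRingEnd ℂ) (Complex.exp (Complex.I*lam*x/2)) = Complex.exp (-(Complex.I*lam*x/2)) := by
    intro x
    rw [← Complex.exp_conj]
    congr 1
    simp [map_div₀, _root_.map_mul, Complex.conj_I, Complex.conj_ofReal, map_ofNat]
    ring
  have hconjexp' : ∀ x : ℝ,
      (starRingEnd ℂ) (Complex.exp (-(Complex.I*lam*x/2))) = Complex.exp (Complex.I*lam*x/2) := by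
    intro x
    rw [← Complex.exp_conj]
    congr 1
    simp [map_div₀, _root_.map_mul, Complex.conj_I, Complex.conj_ofReal, map_ofNat]
    ring
  have hsymN : ∀ x : ℝ, Nn x 1 1 = (starRingEnd ℂ) (Nn x 0 0)
      ∧ Nn x 0 1 = (starRingEnd ℂ) (Nn x 1 0) := by
    intro x
    have e01 : M L x 0 0 1 = (starRingEnd ℂ) (M L x 0 1 0) := by
      have := congrFun (congrFun (hMs x) 0) 1; simpa using this
    have e11 : M L x 0 1 1 = (starRingEnd ℂ) (M L x 0 0 0) := by
      have := congrFun (congrFun (hMs x) 1) 1; simpa using this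
    constructor
    · rw [hNe1 x 1, hNe0 x 0, _root_.map_mul, hconjexp x, e11]
    · rw [hNe0 x 1, hNe1 x 0, _root_.map_mul, hconjexp' x, e01]
  -- limit relations
  have hP11 : Np 1 1 = (starRingEnd ℂ) (Np 0 0) := by
    refine tendsto_nhds_unique (hTop 1 1) ?_
    have h := (hTop 0 0).star
    rw [show star (Np 0 0) = (starRingEnd ℂ) (Np 0 0) from rfl] at h
    exact h.congr fun x => ((hsymN x).1).symm
  have hP01 : Np 0 1 = (starRingEnd ℂ) (Np 1 0) := by
    refine tendsto_nhds_unique (hTop 0 1) ?_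
    have h := (hTop 1 0).star
    rw [show star (Np 1 0) = (starRingEnd ℂ) (Np 1 0) from rfl] at h
    exact h.congr fun x => ((hsymN x).2).symm
  have hM11 : Nm 1 1 = (starRingEnd ℂ) (Nm 0 0) := by
    refine tendsto_nhds_unique (hBot 1 1) ?_
    have h := (hBot 0 0).star
    rw [show star (Nm 0 0) = (starRingEnd ℂ) (Nm 0 0) from rfl] at h
    exact h.congr fun x => ((hsymN x).1).symm
  have hM01 : Nm 0 1 = (starRingEnd ℂ) (Nm 1 0) := by
    refine tendsto_nhds_unique (hBot 0 1) ?_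
    have h := (hBot 1 0).star
    rw [show star (Nm 1 0) = (starRingEnd ℂ) (Nm 1 0) from rfl] at h
    exact h.congr fun x => ((hsymN x).2).symm
  -- determinant equals 1, and in the limit
  have hdetNn : ∀ x : ℝ, Nn x 0 0 * Nn x 1 1 - Nn x 0 1 * Nn x 1 0 = 1 := by
    intro x
    rw [hNe0 x 0, hNe0 x 1, hNe1 x 0, hNe1 x 1]
    have he : Complex.exp (Complex.I*lam*x/2) * Complex.exp (-(Complex.I*lam*x/2)) = 1 := by
      rw [← Complex.exp_add]; simp
    linear_combination (M L x 0 0 0 * M L x 0 1 1 - M L x 0 0 1 * M L x 0 1 0) * he + hdet x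
  have hdetP : Np 0 0 * Np 1 1 - Np 0 1 * Np 1 0 = 1 := by
    have h1 : Tendsto (fun x => Nn x 0 0 * Nn x 1 1 - Nn x 0 1 * Nn x 1 0) atTop
        (nhds (Np 0 0 * Np 1 1 - Np 0 1 * Np 1 0)) :=
      ((hTop 0 0).mul (hTop 1 1)).sub ((hTop 0 1).mul (hTop 1 0))
    have h2 : Tendsto (fun x : ℝ => Nn x 0 0 * Nn x 1 1 - Nn x 0 1 * Nn x 1 0) atTop
        (nhds 1) := tendsto_const_nhds.congr fun x => (hdetNn x).symm
    exact tendsto_nhds_unique h1 h2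
  have hdetM2 : Nm 0 0 * Nm 1 1 - Nm 0 1 * Nm 1 0 = 1 := by
    have h1 : Tendsto (fun x => Nn x 0 0 * Nn x 1 1 - Nn x 0 1 * Nn x 1 0) atBot
        (nhds (Nm 0 0 * Nm 1 1 - Nm 0 1 * Nm 1 0)) :=
      ((hBot 0 0).mul (hBot 1 1)).sub ((hBot 0 1).mul (hBot 1 0))
    have h2 : Tendsto (fun x : ℝ => Nn x 0 0 * Nn x 1 1 - Nn x 0 1 * Nn x 1 0) atBot
        (nhds 1) := tendsto_const_nhds.congr fun x => (hdetNn x).symm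
    exact tendsto_nhds_unique h1 h2
  -- the limit matrix
  set av : ℂ := Np 0 0 * Nm 1 1 - Np 0 1 * Nm 1 0 with hav
  set bv : ℂ := Np 1 0 * Nm 1 1 - Np 1 1 * Nm 1 0 with hbv
  refine ⟨av, bv, ?_, ?_⟩
  · -- the convergence statement
    have hfeq : ∀ p : ℝ × ℝ, Einv lam p.1 * M L p.1 p.2 * Einv lam (-p.2)
        = Nn p.1 * !![Nn p.2 1 1, -(Nn p.2 0 1); -(Nn p.2 1 0), Nn p.2 0 0] := by
      intro p
      rw [hcc p.2 p.1]
      have h2 : (!![M L p.2 0 1 1, -(M L p.2 0 0 1); -(M L p.2 0 1 0), M L p.2 0 0 0]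
            : Matrix (Fin 2) (Fin 2) ℂ) * Einv lam (-p.2)
          = !![Nn p.2 1 1, -(Nn p.2 0 1); -(Nn p.2 1 0), Nn p.2 0 0] := by
        have he : Complex.exp (Complex.I*lam*(-(p.2:ℂ))/2) = Complex.exp (-(Complex.I*lam*p.2/2)) := by
          congr 1; ring
        have he2 : Complex.exp (-(Complex.I*lam*(-(p.2:ℂ))/2)) = Complex.exp (Complex.I*lam*p.2/2) := by
          congr 1; ring
        ext i j
        fin_cases i <;> fin_cases j <;>
          rw [Matrix.mul_apply, Fin.sum_univ_two] <;>
          simp [Einv, hNe0, hNe1, he, he2] <;>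
          ring
      calc Einv lam p.1 * (M L p.1 0
            * !![M L p.2 0 1 1, -(M L p.2 0 0 1); -(M L p.2 0 1 0), M L p.2 0 0 0])
            * Einv lam (-p.2)
          = (Einv lam p.1 * M L p.1 0)
            * (!![M L p.2 0 1 1, -(M L p.2 0 0 1); -(M L p.2 0 1 0), M L p.2 0 0 0]
              * Einv lam (-p.2)) := by
            simp only [Matrix.mul_assoc]
        _ = Nn p.1 * !![Nn p.2 1 1, -(Nn p.2 0 1); -(Nn p.2 1 0), Nn p.2 0 0] := by
            rw [h2]
    have hTp : ∀ i j : Fin 2, Tendsto (fun p : ℝ × ℝ => Nn p.1 i j)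
        (atTop ×ˢ atBot) (nhds (Np i j)) := fun i j => (hTop i j).comp tendsto_fst
    have hBp : ∀ i j : Fin 2, Tendsto (fun p : ℝ × ℝ => Nn p.2 i j)
        (atTop ×ˢ atBot) (nhds (Nm i j)) := fun i j => (hBot i j).comp tendsto_snd
    have hT : Tendsto (fun p : ℝ × ℝ =>
          Nn p.1 * !![Nn p.2 1 1, -(Nn p.2 0 1); -(Nn p.2 1 0), Nn p.2 0 0])
        (atTop ×ˢ atBot) (nhds !![av, (starRingEnd ℂ) bv; bv, (starRingEnd ℂ) av]) := by
      have e00 : av = Np 0 0 * Nm 1 1 + Np 0 1 * -(Nm 1 0) := by rw [hav]; ring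
      have e10 : bv = Np 1 0 * Nm 1 1 + Np 1 1 * -(Nm 1 0) := by rw [hbv]; ring
      have e01 : (starRingEnd ℂ) bv = Np 0 0 * -(Nm 0 1) + Np 0 1 * Nm 0 0 := by
        rw [hbv, map_sub, _root_.map_mul, _root_.map_mul, hM11, hP11, Complex.conj_conj,
          Complex.conj_conj, ← hP01, ← hM01]
        ring
      have e11 : (starRingEnd ℂ) av = Np 1 0 * -(Nm 0 1) + Np 1 1 * Nm 0 0 := by
        rw [hav, map_sub, _root_.map_mul, _root_.map_mul, hM11, hP01, Complex.conj_conj,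
          Complex.conj_conj, ← hP11, ← hM01]
        ring
      have hfun : ∀ (i j : Fin 2) (p : ℝ × ℝ),
          Nn p.1 i 0 * !![Nn p.2 1 1, -(Nn p.2 0 1); -(Nn p.2 1 0), Nn p.2 0 0] 0 j
            + Nn p.1 i 1 * !![Nn p.2 1 1, -(Nn p.2 0 1); -(Nn p.2 1 0), Nn p.2 0 0] 1 j
          = (Nn p.1 * !![Nn p.2 1 1, -(Nn p.2 0 1); -(Nn p.2 1 0), Nn p.2 0 0]) i j := by
        intro i j p
        rw [Matrix.mul_apply, Fin.sum_univ_two]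
      apply tendsto_pi_nhds.mpr
      intro i
      apply tendsto_pi_nhds.mpr
      intro j
      fin_cases i <;> fin_cases j
      · have h := (((hTp 0 0).mul (hBp 1 1)).add ((hTp 0 1).mul ((hBp 1 0).neg))).congr
          (fun p => by simpa using hfun 0 0 p)
        rw [← e00] at h
        simpa using h
      · have h := (((hTp 0 0).mul ((hBp 0 1).neg)).add ((hTp 0 1).mul (hBp 0 0))).congr
          (fun p => by simpa using hfun 0 1 p)
        rw [← e01] at h
        simpa using h
      · have h := (((hTp 1 0).mul (hBp 1 1)).add ((hTp 1 1).mul ((hBp 1 0).neg))).congr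
          (fun p => by simpa using hfun 1 0 p)
        rw [← e10] at h
        simpa using h
      · have h := (((hTp 1 0).mul ((hBp 0 1).neg)).add ((hTp 1 1).mul (hBp 0 0))).congr
          (fun p => by simpa using hfun 1 1 p)
        rw [← e11] at h
        simpa using h
    exact hT.congr fun p => (hfeq p).symm
  · -- |a|² - |b|² = 1
    have h1 := hdetP
    rw [hP11, hP01] at h1
    have h2 := hdetM2
    rw [hM11, hM01] at h2
    have hA : av = Np 0 0 * (starRingEnd ℂ) (Nm 0 0) - (starRingEnd ℂ) (Np 1 0) * Nm 1 0 := by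
      rw [hav, hM11, hP01]
    have hBv : bv = Np 1 0 * (starRingEnd ℂ) (Nm 0 0) - (starRingEnd ℂ) (Np 0 0) * Nm 1 0 := by
      rw [hbv, hM11, hP11]
    have key : av * (starRingEnd ℂ) av - bv * (starRingEnd ℂ) bv = 1 := by
      rw [hA, hBv]
      simp only [map_sub, _root_.map_mul, Complex.conj_conj]
      linear_combination (Np 0 0 * (starRingEnd ℂ) (Np 0 0)
        - Np 1 0 * (starRingEnd ℂ) (Np 1 0)) * h2 + h1
    have hcast : ((Complex.normSq av - Complex.normSq bv : ℝ) : ℂ) = 1 := by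
      push_cast
      rw [← Complex.mul_conj, ← Complex.mul_conj]
      exact key
    have h3 : Complex.normSq av - Complex.normSq bv = 1 := by exact_mod_cast hcast
    rw [← Complex.sq_norm, ← Complex.sq_norm] at h3
    exact h3
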